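/- Let A = S₁ C S₂⁻¹ where S₁, S₂ are 3×3 diagonal matrices with positive diagonal entries and C is a 3×3 real matrix with C Cᵀ = I₃. Then A₀ s₂ = 0, where s₂ is the (entrywise positive, hence nonzero) vector of squared diagonal entries of S₂; consequently the rank of A₀ is at most 2. Moreover A_I s₂ = s₁. -/

import Mathlib

/-- `A_I`: the matrix of squared entries of `A`. -/
def matAI (A : Matrix (Fin 3) (Fin 3) ℝ) : Matrix (Fin 3) (Fin 3) ℝ :=
  Matrix.of fun i j => (A i j) ^ 2

/-- `A₀`: the matrix with `(A₀)_{1j} = a_{1j} a_{2j}`, `(A₀)_{2j} = a_{2j} a_{3j}`,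
`(A₀)_{3j} = a_{3j} a_{1j}` (cyclic products of consecutive rows). -/
def matA0 (A : Matrix (Fin 3) (Fin 3) ℝ) : Matrix (Fin 3) (Fin 3) ℝ :=
  Matrix.of fun i j => A i j * A (i + 1) j

/-- for `A = S₁ C S₂⁻¹` with `C Cᵀ = I₃`, we have `A₀ s₂ = 0` (hence
`rank A₀ ≤ 2`, since `s₂` is entrywise positive and so nonzero), and `A_I s₂ = s₁`. -/
theorem stmt7 (s₁ s₂ : Fin 3 → ℝ)
    (h₁ : ∀ i, 0 < s₁ i) (h₂ : ∀ i, 0 < s₂ i)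
    (C : Matrix (Fin 3) (Fin 3) ℝ) (hC : C * C.transpose = 1)
    (A : Matrix (Fin 3) (Fin 3) ℝ)
    (hA : A = Matrix.diagonal s₁ * C * (Matrix.diagonal s₂)⁻¹) :
    (matA0 A).mulVec (fun i => (s₂ i) ^ 2) = 0 ∧
    (matA0 A).rank ≤ 2 ∧
    (matAI A).mulVec (fun i => (s₂ i) ^ 2) = (fun i => (s₁ i) ^ 2) := by
  have hinv : (Matrix.diagonal s₂)⁻¹ = Matrix.diagonal (fun i => (s₂ i)⁻¹) := by
    apply Matrix.inv_eq_right_inv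
    rw [Matrix.diagonal_mul_diagonal]
    have : (fun i => s₂ i * (s₂ i)⁻¹) = fun _ => (1:ℝ) := by
      funext i; field_simp [(h₂ i).ne']
    rw [this, Matrix.diagonal_one]
  have hAij : ∀ i j, A i j = s₁ i * C i j * (s₂ j)⁻¹ := by
    intro i j
    simp [hA, hinv, Matrix.mul_diagonal, Matrix.diagonal_mul]
  have hCC : ∀ i k, (∑ j, C i j * C k j) = if i = k then (1:ℝ) else 0 := by
    intro i k
    have := congrFun (congrFun hC i) k
    simpa [Matrix.mul_apply, Matrix.one_apply] using this
  have h0 : (matA0 A).mulVec (fun i => (s₂ i) ^ 2) = 0 := by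
    funext i
    have hne : i ≠ i + 1 := by fin_cases i <;> decide
    have : (matA0 A).mulVec (fun i => (s₂ i) ^ 2) i
        = s₁ i * s₁ (i+1) * ∑ j, C i j * C (i+1) j := by
      rw [Finset.mul_sum]
      simp only [Matrix.mulVec, dotProduct, matA0, Matrix.of_apply, hAij]
      apply Finset.sum_congr rfl
      intro j _
      have := (h₂ j).ne'
      field_simp
    rw [this, hCC, if_neg hne]
    simp
  refine ⟨h0, ?_, ?_⟩
  · -- rank ≤ 2
    have hv : (matA0 A).mulVecLin (fun i => (s₂ i) ^ 2) = 0 := h0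
    have hvne : (fun i => (s₂ i) ^ 2) ≠ (0 : Fin 3 → ℝ) := by
      intro h
      have := congrFun h 0
      simp at this
      exact (h₂ 0).ne' this
    have hker : Nontrivial (LinearMap.ker (matA0 A).mulVecLin) := by
      refine nontrivial_of_ne ⟨_, hv⟩ 0 ?_
      exact fun h => hvne (congrArg Subtype.val h)
    have hpos : 0 < Module.finrank ℝ (LinearMap.ker (matA0 A).mulVecLin) :=
      Module.finrank_pos
    have hsum := LinearMap.finrank_range_add_finrank_ker (matA0 A).mulVecLin
    have h3 : Module.finrank ℝ (Fin 3 → ℝ) = 3 := by simp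
    rw [h3] at hsum
    rw [Matrix.rank]
    omega
  · funext i
    have : (matAI A).mulVec (fun i => (s₂ i) ^ 2) i
        = s₁ i ^ 2 * ∑ j, C i j * C i j := by
      rw [Finset.mul_sum]
      simp only [Matrix.mulVec, dotProduct, matAI, Matrix.of_apply, hAij]
      apply Finset.sum_congr rfl
      intro j _
      have := (h₂ j).ne'
      field_simp
    rw [this, hCC]
    simp
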